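/- If A ∈ Mat_{n×n}(ℝ) is skew-symmetric, then π_A is a Poisson bivector on ℝ^n: the matrix π_A(x) is skew-symmetric for every x ∈ ℝ^n, and the Jacobi identity Σ_{l=1}^n ( ∂(π_A)_{ij}/∂x_l · (π_A)_{lk} + ∂(π_A)_{jk}/∂x_l · (π_A)_{li} + ∂(π_A)_{ki}/∂x_l · (π_A)_{lj} ) = 0 holds at every point x ∈ ℝ^n and for all indices i,j,k. -/

import Mathlib

open Matrix

/-- Index set of a polymatrix game with signature `n : Fin p → ℕ`:
`i = ⟨α, k⟩` is the `k`-th strategy of group `α`. -/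
abbrev Idx (p : ℕ) (n : Fin p → ℕ) : Type := (α : Fin p) × Fin (n α)

noncomputable section

/-- The polymatrix replicator vector field `X_{(n̲,A)}`; note that
`Σ_β (x^α)ᵗ A^{α,β} x^β = Σ_{k ∈ α} x_k (Ax)_k`. -/
def replicator {p : ℕ} {n : Fin p → ℕ} (A : Matrix (Idx p n) (Idx p n) ℝ)
    (x : Idx p n → ℝ) (i : Idx p n) : ℝ :=
  x i * (A.mulVec x i - ∑ k : Fin (n i.1), x ⟨i.1, k⟩ * A.mulVec x ⟨i.1, k⟩)

/-- The polytope `Γ_n̲` (product of simplexes). -/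
def Gamma (p : ℕ) (n : Fin p → ℕ) : Set (Idx p n → ℝ) :=
  {x | (∀ i, 0 ≤ x i) ∧ ∀ α : Fin p, ∑ k : Fin (n α), x ⟨α, k⟩ = 1}

/-- The relative interior `Γ°_n̲`. -/
def GammaInt (p : ℕ) (n : Fin p → ℕ) : Set (Idx p n → ℝ) :=
  {x | (∀ i, 0 < x i) ∧ ∀ α : Fin p, ∑ k : Fin (n α), x ⟨α, k⟩ = 1}

/-- The block diagonal matrix `T_x = diag(T^1_x,…,T^p_x)`, `T^α_x = x^α 𝟙ᵗ - I`. -/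
def Tmat {p : ℕ} {n : Fin p → ℕ} (x : Idx p n → ℝ) : Matrix (Idx p n) (Idx p n) ℝ :=
  fun i j => (if i.1 = j.1 then x i else 0) - (if i = j then 1 else 0)

/-- The bivector `π_A(x) = - T_x D_x A D_x T_xᵀ`. -/
def piA {p : ℕ} {n : Fin p → ℕ} (A : Matrix (Idx p n) (Idx p n) ℝ) (x : Idx p n → ℝ) :
    Matrix (Idx p n) (Idx p n) ℝ :=
  -(Tmat x * Matrix.diagonal x * A * Matrix.diagonal x * (Tmat x)ᵀ)

/-- A formal equilibrium of the polymatrix game `(n̲, A)`. -/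
def FormalEq {p : ℕ} {n : Fin p → ℕ} (A : Matrix (Idx p n) (Idx p n) ℝ)
    (q : Idx p n → ℝ) : Prop :=
  (∀ (α : Fin p) (i j : Fin (n α)), A.mulVec q ⟨α, i⟩ = A.mulVec q ⟨α, j⟩) ∧
  ∀ α : Fin p, ∑ j : Fin (n α), q ⟨α, j⟩ = 1

namespace Stmt6Aux
variable {p : ℕ} {n : Fin p → ℕ}

def aF (A : Matrix (Idx p n) (Idx p n) ℝ) (x : Idx p n → ℝ) (w : Idx p n) (β : Fin p) : ℝ :=
  ∑ m : Fin (n β), A w ⟨β, m⟩ * x ⟨β, m⟩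

def QF (A : Matrix (Idx p n) (Idx p n) ℝ) (x : Idx p n → ℝ) (α β : Fin p) : ℝ :=
  ∑ k : Fin (n α), x ⟨α, k⟩ * aF A x ⟨α, k⟩ β

def BF (A : Matrix (Idx p n) (Idx p n) ℝ) (x : Idx p n → ℝ) (i j : Idx p n) : ℝ :=
  A i j + aF A x j i.1 - aF A x i j.1 + QF A x i.1 j.1


def GF (A : Matrix (Idx p n) (Idx p n) ℝ) (x : Idx p n → ℝ) (δ : Fin p) (w k : Idx p n) : ℝ :=
  ∑ m : Fin (n δ), x ⟨δ, m⟩ * A w ⟨δ, m⟩ * A ⟨δ, m⟩ k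

def KF (A : Matrix (Idx p n) (Idx p n) ℝ) (x : Idx p n → ℝ) (δ : Fin p) (w : Idx p n) (γ : Fin p) : ℝ :=
  ∑ m : Fin (n δ), x ⟨δ, m⟩ * A w ⟨δ, m⟩ * aF A x ⟨δ, m⟩ γ

def HF (A : Matrix (Idx p n) (Idx p n) ℝ) (x : Idx p n → ℝ) (δ β γ : Fin p) : ℝ :=
  ∑ m : Fin (n δ), x ⟨δ, m⟩ * aF A x ⟨δ, m⟩ β * aF A x ⟨δ, m⟩ γ

def UF (A : Matrix (Idx p n) (Idx p n) ℝ) (x : Idx p n → ℝ) (δ : Fin p) (w k : Idx p n) (β : Fin p) : ℝ :=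
  ∑ m : Fin (n δ), x ⟨δ, m⟩ * BF A x ⟨δ, m⟩ k * (A w ⟨δ, m⟩ + aF A x ⟨δ, m⟩ β)

variable {A : Matrix (Idx p n) (Idx p n) ℝ} {x : Idx p n → ℝ}


lemma sum_group (α : Fin p) (f : Idx p n → ℝ) :
    ∑ l : Idx p n, (if α = l.1 then f l else 0) = ∑ m : Fin (n α), f ⟨α, m⟩ := by
  rw [← Finset.univ_sigma_univ, Finset.sum_sigma]
  rw [Finset.sum_congr rfl (fun δ _ => show (∑ m : Fin (n δ), if α = δ then f ⟨δ, m⟩ else 0)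
      = if α = δ then ∑ m : Fin (n δ), f ⟨δ, m⟩ else 0 by split_ifs <;> simp)]
  simp

lemma sum_xA (hA' : ∀ a b, A a b = -A b a) (δ : Fin p) (w : Idx p n) :
    ∑ m : Fin (n δ), x ⟨δ, m⟩ * A ⟨δ, m⟩ w = -aF A x w δ := by
  unfold aF
  rw [← Finset.sum_neg_distrib]
  exact Finset.sum_congr rfl fun m _ => by rw [hA' ⟨δ, m⟩ w]; ring

lemma piA_apply (hA' : ∀ a b, A a b = -A b a) (i j : Idx p n) :
    piA A x i j = -(x i * x j * BF A x i j) := by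
  have hTD : ∀ w l : Idx p n, (Tmat x * Matrix.diagonal x * A) w l
      = x w * (∑ m : Fin (n w.1), x ⟨w.1, m⟩ * A ⟨w.1, m⟩ l) - x w * A w l := by
    intro w l
    rw [Matrix.mul_apply]
    have : ∀ k : Idx p n, (Tmat x * Matrix.diagonal x) w k * A k l
        = (if w.1 = k.1 then x w * (x k * A k l) else 0) - (if w = k then x k * A k l else 0) := by
      intro k
      rw [Matrix.mul_diagonal, Tmat]
      split_ifs <;> ring
    rw [Finset.sum_congr rfl fun k _ => this k, Finset.sum_sub_distrib, sum_group w.1]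
    simp [Finset.mul_sum, mul_assoc]
  show -(Tmat x * Matrix.diagonal x * A * Matrix.diagonal x * (Tmat x)ᵀ) i j = _
  rw [Matrix.mul_apply]
  have hstep : ∀ l : Idx p n, (Tmat x * Matrix.diagonal x * A * Matrix.diagonal x) i l * (Tmat x)ᵀ l j
      = (if j.1 = l.1 then x j * ((x i * (∑ m : Fin (n i.1), x ⟨i.1, m⟩ * A ⟨i.1, m⟩ l) - x i * A i l) * x l) else 0)
        - (if j = l then (x i * (∑ m : Fin (n i.1), x ⟨i.1, m⟩ * A ⟨i.1, m⟩ l) - x i * A i l) * x l else 0) := by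
    intro l
    rw [Matrix.mul_diagonal, Matrix.transpose_apply, hTD, Tmat]
    split_ifs <;> ring
  rw [Finset.sum_congr rfl fun l _ => hstep l, Finset.sum_sub_distrib, sum_group j.1]
  simp only [Finset.sum_ite_eq, Finset.mem_univ, if_true]
  -- now pure sum algebra
  have h1 : ∀ m : Fin (n j.1), x j * ((x i * (∑ m' : Fin (n i.1), x ⟨i.1, m'⟩ * A ⟨i.1, m'⟩ ⟨j.1, m⟩)
      - x i * A i ⟨j.1, m⟩) * x ⟨j.1, m⟩)
      = x i * x j * (∑ m' : Fin (n i.1), x ⟨i.1, m'⟩ * (A ⟨i.1, m'⟩ ⟨j.1, m⟩ * x ⟨j.1, m⟩))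
          - x i * x j * (A i ⟨j.1, m⟩ * x ⟨j.1, m⟩) := by
    intro m
    rw [show (∑ m' : Fin (n i.1), x ⟨i.1, m'⟩ * (A ⟨i.1, m'⟩ ⟨j.1, m⟩ * x ⟨j.1, m⟩))
        = (∑ m' : Fin (n i.1), x ⟨i.1, m'⟩ * A ⟨i.1, m'⟩ ⟨j.1, m⟩) * x ⟨j.1, m⟩ by
      rw [Finset.sum_mul]; exact Finset.sum_congr rfl fun _ _ => by ring]
    ring
  rw [Finset.sum_congr rfl fun m _ => h1 m, Finset.sum_sub_distrib, ← Finset.mul_sum,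
    ← Finset.mul_sum, sum_xA hA' i.1 j]
  rw [show (∑ m : Fin (n j.1), ∑ m' : Fin (n i.1), x ⟨i.1, m'⟩ * (A ⟨i.1, m'⟩ ⟨j.1, m⟩ * x ⟨j.1, m⟩))
      = QF A x i.1 j.1 by
    rw [Finset.sum_comm]
    unfold QF aF
    simp [Finset.mul_sum, mul_assoc]]
  rw [show (∑ m : Fin (n j.1), A i ⟨j.1, m⟩ * x ⟨j.1, m⟩) = aF A x i j.1 from rfl]
  rw [BF]
  ring

lemma sum_single (l : Idx p n) (α : Fin p) (f : Idx p n → ℝ) :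
    ∑ m : Fin (n α), f ⟨α, m⟩ * (Pi.single l (1 : ℝ) : Idx p n → ℝ) ⟨α, m⟩ = if l.1 = α then f l else 0 := by
  obtain ⟨γ, b⟩ := l
  by_cases h : γ = α
  · subst h
    simp only [Pi.single_apply, Sigma.mk.inj_iff, heq_eq_eq, true_and]
    simp [Finset.sum_ite_eq', mul_ite]
  · have h0 : ∀ m : Fin (n α), (Pi.single (⟨γ, b⟩ : Idx p n) (1 : ℝ) : Idx p n → ℝ) ⟨α, m⟩ = 0 := by
      intro m
      rw [Pi.single_apply, if_neg]
      intro hc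
      exact h (congrArg Sigma.fst hc).symm
    simp [h0, h]

lemma fderiv_piA_single (hA' : ∀ a b, A a b = -A b a) (i j l : Idx p n) :
    fderiv ℝ (fun y => piA A y i j) x (Pi.single l 1) =
      -((((if i = l then (1:ℝ) else 0) * x j + (if j = l then (1:ℝ) else 0) * x i) * BF A x i j)
        + x i * x j * ((if l.1 = i.1 then A j l + aF A x l j.1 else 0)
           - (if l.1 = j.1 then A i l + aF A x l i.1 else 0))) := by
  have haF : ∀ (w : Idx p n) (β : Fin p), HasFDerivAt (fun y : Idx p n → ℝ => aF A y w β)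
      (∑ m : Fin (n β), A w ⟨β, m⟩ • ContinuousLinearMap.proj (R := ℝ) (φ := fun _ : Idx p n => ℝ) ⟨β, m⟩) x := by
    intro w β
    exact HasFDerivAt.fun_sum fun m _ =>
      (ContinuousLinearMap.proj (R := ℝ) (φ := fun _ : Idx p n => ℝ) (⟨β, m⟩ : Idx p n)).hasFDerivAt.const_mul _
  have hQ : HasFDerivAt (fun y : Idx p n → ℝ => QF A y i.1 j.1)
      (∑ k : Fin (n i.1), (x ⟨i.1, k⟩ • (∑ m : Fin (n j.1), A ⟨i.1, k⟩ ⟨j.1, m⟩ • ContinuousLinearMap.proj (R := ℝ) (φ := fun _ : Idx p n => ℝ) ⟨j.1, m⟩)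
        + aF A x ⟨i.1, k⟩ j.1 • ContinuousLinearMap.proj (R := ℝ) (φ := fun _ : Idx p n => ℝ) ⟨i.1, k⟩)) x := by
    exact HasFDerivAt.fun_sum fun k _ =>
      (ContinuousLinearMap.proj (R := ℝ) (φ := fun _ : Idx p n => ℝ) (⟨i.1, k⟩ : Idx p n)).hasFDerivAt.mul (haF ⟨i.1, k⟩ j.1)
  have hB : HasFDerivAt (fun y : Idx p n → ℝ => BF A y i j)
      (((0 + ∑ m : Fin (n i.1), A j ⟨i.1, m⟩ • ContinuousLinearMap.proj (R := ℝ) (φ := fun _ : Idx p n => ℝ) ⟨i.1, m⟩)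
        - ∑ m : Fin (n j.1), A i ⟨j.1, m⟩ • ContinuousLinearMap.proj (R := ℝ) (φ := fun _ : Idx p n => ℝ) ⟨j.1, m⟩)
        + ∑ k : Fin (n i.1), (x ⟨i.1, k⟩ • (∑ m : Fin (n j.1), A ⟨i.1, k⟩ ⟨j.1, m⟩ • ContinuousLinearMap.proj (R := ℝ) (φ := fun _ : Idx p n => ℝ) ⟨j.1, m⟩)
          + aF A x ⟨i.1, k⟩ j.1 • ContinuousLinearMap.proj (R := ℝ) (φ := fun _ : Idx p n => ℝ) ⟨i.1, k⟩)) x := by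
    exact (((hasFDerivAt_const (A i j) x).add (haF j i.1)).sub (haF i j.1)).add hQ
  have hprod : HasFDerivAt (fun y : Idx p n → ℝ => -(y i * y j * BF A y i j))
      (-(((x i * x j) • (((0 + ∑ m : Fin (n i.1), A j ⟨i.1, m⟩ • ContinuousLinearMap.proj (R := ℝ) (φ := fun _ : Idx p n => ℝ) ⟨i.1, m⟩)
        - ∑ m : Fin (n j.1), A i ⟨j.1, m⟩ • ContinuousLinearMap.proj (R := ℝ) (φ := fun _ : Idx p n => ℝ) ⟨j.1, m⟩)
        + ∑ k : Fin (n i.1), (x ⟨i.1, k⟩ • (∑ m : Fin (n j.1), A ⟨i.1, k⟩ ⟨j.1, m⟩ • ContinuousLinearMap.proj (R := ℝ) (φ := fun _ : Idx p n => ℝ) ⟨j.1, m⟩)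
          + aF A x ⟨i.1, k⟩ j.1 • ContinuousLinearMap.proj (R := ℝ) (φ := fun _ : Idx p n => ℝ) ⟨i.1, k⟩)))
       + (BF A x i j) • (x i • ContinuousLinearMap.proj (R := ℝ) (φ := fun _ : Idx p n => ℝ) j
           + x j • ContinuousLinearMap.proj (R := ℝ) (φ := fun _ : Idx p n => ℝ) i))) x := by
    exact (((ContinuousLinearMap.proj (R := ℝ) (φ := fun _ : Idx p n => ℝ) i).hasFDerivAt.mul
      (ContinuousLinearMap.proj (R := ℝ) (φ := fun _ : Idx p n => ℝ) j).hasFDerivAt).mul hB).neg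
  have hfun : (fun y : Idx p n → ℝ => piA A y i j) = (fun y : Idx p n → ℝ => -(y i * y j * BF A y i j)) :=
    funext fun y => piA_apply hA' i j
  rw [hfun, hprod.fderiv]
  simp only [ContinuousLinearMap.neg_apply, ContinuousLinearMap.add_apply,
    ContinuousLinearMap.smul_apply, ContinuousLinearMap.sub_apply, ContinuousLinearMap.coe_sum',
    Finset.sum_apply, ContinuousLinearMap.proj_apply, ContinuousLinearMap.zero_apply,
    smul_eq_mul, ContinuousLinearMap.coe_zero, Pi.zero_apply]
  rw [show (∑ m : Fin (n i.1), A j ⟨i.1, m⟩ * (Pi.single l (1:ℝ) : Idx p n → ℝ) ⟨i.1, m⟩)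
      = if l.1 = i.1 then A j l else 0 from sum_single l i.1 (fun w => A j w)]
  rw [show (∑ m : Fin (n j.1), A i ⟨j.1, m⟩ * (Pi.single l (1:ℝ) : Idx p n → ℝ) ⟨j.1, m⟩)
      = if l.1 = j.1 then A i l else 0 from sum_single l j.1 (fun w => A i w)]
  have hQpart : (∑ k : Fin (n i.1), (x ⟨i.1, k⟩ * ∑ m : Fin (n j.1), A ⟨i.1, k⟩ ⟨j.1, m⟩ * (Pi.single l (1:ℝ) : Idx p n → ℝ) ⟨j.1, m⟩
        + aF A x ⟨i.1, k⟩ j.1 * (Pi.single l (1:ℝ) : Idx p n → ℝ) ⟨i.1, k⟩))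
      = (if l.1 = j.1 then -aF A x l i.1 else 0) + (if l.1 = i.1 then aF A x l j.1 else 0) := by
    rw [Finset.sum_add_distrib]
    rw [show (∑ k : Fin (n i.1), aF A x ⟨i.1, k⟩ j.1 * (Pi.single l (1:ℝ) : Idx p n → ℝ) ⟨i.1, k⟩)
        = if l.1 = i.1 then aF A x l j.1 else 0 from sum_single l i.1 (fun w => aF A x w j.1)]
    congr 1
    rw [Finset.sum_congr rfl (fun k _ => by
      rw [sum_single l j.1 (fun w => A ⟨i.1, k⟩ w), mul_ite, mul_zero])]
    split_ifs with h
    · exact sum_xA hA' i.1 l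
    · simp
  rw [hQpart]
  rw [Pi.single_apply, Pi.single_apply]
  split_ifs <;> ring


lemma sum_group' (α : Fin p) (f : Idx p n → ℝ) :
    ∑ l : Idx p n, (if l.1 = α then f l else 0) = ∑ m : Fin (n α), f ⟨α, m⟩ := by
  rw [← sum_group α f]
  exact Finset.sum_congr rfl fun l _ => if_congr eq_comm rfl rfl

lemma key (hA' : ∀ a b, A a b = -A b a) (i j k : Idx p n) :
    ∑ l : Idx p n, fderiv ℝ (fun y => piA A y i j) x (Pi.single l 1) * piA A x l k
    = x i * x j * x k * (BF A x i j * BF A x i k + BF A x i j * BF A x j k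
        + UF A x i.1 j k j.1 - UF A x j.1 i k i.1) := by
  have step : ∀ l : Idx p n, fderiv ℝ (fun y => piA A y i j) x (Pi.single l 1) * piA A x l k
      = ((if i = l then x j * BF A x i j * (x l * x k * BF A x l k) else 0)
        + (if j = l then x i * BF A x i j * (x l * x k * BF A x l k) else 0))
        + ((if l.1 = i.1 then x i * x j * ((A j l + aF A x l j.1) * (x l * x k * BF A x l k)) else 0)
          - (if l.1 = j.1 then x i * x j * ((A i l + aF A x l i.1) * (x l * x k * BF A x l k)) else 0)) := by
    intro l
    rw [fderiv_piA_single hA', piA_apply hA']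
    split_ifs <;> ring
  rw [Finset.sum_congr rfl fun l _ => step l, Finset.sum_add_distrib, Finset.sum_add_distrib,
    Finset.sum_sub_distrib, Finset.sum_ite_eq, Finset.sum_ite_eq, sum_group' i.1, sum_group' j.1]
  simp only [Finset.mem_univ, if_true]
  rw [show (∑ m : Fin (n i.1), x i * x j * ((A j ⟨i.1, m⟩ + aF A x ⟨i.1, m⟩ j.1)
        * (x ⟨i.1, m⟩ * x k * BF A x ⟨i.1, m⟩ k)))
      = x i * x j * x k * UF A x i.1 j k j.1 by
    rw [UF, Finset.mul_sum]
    exact Finset.sum_congr rfl fun m _ => by ring]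
  rw [show (∑ m : Fin (n j.1), x i * x j * ((A i ⟨j.1, m⟩ + aF A x ⟨j.1, m⟩ i.1)
        * (x ⟨j.1, m⟩ * x k * BF A x ⟨j.1, m⟩ k)))
      = x i * x j * x k * UF A x j.1 i k i.1 by
    rw [UF, Finset.mul_sum]
    exact Finset.sum_congr rfl fun m _ => by ring]
  ring

lemma UF_eq (hA' : ∀ a b, A a b = -A b a) (δ : Fin p) (w k : Idx p n) (β : Fin p) :
    UF A x δ w k β = GF A x δ w k - KF A x δ k β + (aF A x k δ + QF A x δ k.1) * aF A x w δ
      + (aF A x k δ + QF A x δ k.1) * QF A x δ β - KF A x δ w k.1 - HF A x δ k.1 β := by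
  have h : ∀ m : Fin (n δ), x ⟨δ, m⟩ * BF A x ⟨δ, m⟩ k * (A w ⟨δ, m⟩ + aF A x ⟨δ, m⟩ β)
      = (x ⟨δ, m⟩ * A w ⟨δ, m⟩ * A ⟨δ, m⟩ k
        - x ⟨δ, m⟩ * A k ⟨δ, m⟩ * aF A x ⟨δ, m⟩ β)
        + ((aF A x k δ + QF A x δ k.1) * (A w ⟨δ, m⟩ * x ⟨δ, m⟩)
          + (aF A x k δ + QF A x δ k.1) * (x ⟨δ, m⟩ * aF A x ⟨δ, m⟩ β))
        - x ⟨δ, m⟩ * A w ⟨δ, m⟩ * aF A x ⟨δ, m⟩ k.1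
        - x ⟨δ, m⟩ * aF A x ⟨δ, m⟩ k.1 * aF A x ⟨δ, m⟩ β := by
    intro m
    rw [BF, hA' ⟨δ, m⟩ k]
    ring
  rw [UF, Finset.sum_congr rfl fun m _ => h m]
  simp only [Finset.sum_add_distrib, Finset.sum_sub_distrib, ← Finset.mul_sum]
  unfold GF KF HF QF aF
  ring


lemma QF_antisymm (hA' : ∀ a b, A a b = -A b a) (α β : Fin p) :
    QF A x α β = -QF A x β α := by
  unfold QF aF
  simp only [Finset.mul_sum, ← Finset.sum_neg_distrib]
  rw [Finset.sum_comm]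
  refine Finset.sum_congr rfl fun m _ => Finset.sum_congr rfl fun k _ => ?_
  rw [hA' ⟨α, k⟩ ⟨β, m⟩]; ring

lemma GF_symm (hA' : ∀ a b, A a b = -A b a) (δ : Fin p) (w k : Idx p n) :
    GF A x δ w k = GF A x δ k w := by
  unfold GF
  exact Finset.sum_congr rfl fun m _ => by rw [hA' w ⟨δ, m⟩, hA' ⟨δ, m⟩ k]; ring

lemma HF_symm (δ β γ : Fin p) : HF A x δ β γ = HF A x δ γ β := by
  unfold HF
  exact Finset.sum_congr rfl fun m _ => by ring

end Stmt6Aux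

/-- If `A` is skew-symmetric then `π_A` is a Poisson bivector on `ℝ^n`:
`π_A(x)` is skew-symmetric for every `x`, and the Jacobi identity holds. -/
theorem stmt6 {p : ℕ} {n : Fin p → ℕ} (hn : ∀ α, 0 < n α)
    (A : Matrix (Idx p n) (Idx p n) ℝ) (hA : Aᵀ = -A) :
    (∀ x : Idx p n → ℝ, (piA A x)ᵀ = -(piA A x)) ∧
    (∀ (x : Idx p n → ℝ) (i j k : Idx p n),
      ∑ l : Idx p n,
        (fderiv ℝ (fun y => piA A y i j) x (Pi.single l 1) * piA A x l k
          + fderiv ℝ (fun y => piA A y j k) x (Pi.single l 1) * piA A x l i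
          + fderiv ℝ (fun y => piA A y k i) x (Pi.single l 1) * piA A x l j) = 0) := by
  have hA' : ∀ a b, A a b = -A b a := fun a b => by
    have h := congrFun (congrFun hA b) a
    simpa [Matrix.transpose_apply, Matrix.neg_apply] using h
  constructor
  · intro x
    have hmain : (Tmat x * Matrix.diagonal x * A * Matrix.diagonal x * (Tmat x)ᵀ)ᵀ
        = -(Tmat x * Matrix.diagonal x * A * Matrix.diagonal x * (Tmat x)ᵀ) := by
      simp [Matrix.transpose_mul, Matrix.diagonal_transpose, Matrix.transpose_transpose, hA,
        Matrix.neg_mul, Matrix.mul_neg, Matrix.mul_assoc]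
    unfold piA
    rw [Matrix.transpose_neg]
    exact congrArg Neg.neg hmain
  · intro x i j k
    simp only [Finset.sum_add_distrib]
    rw [Stmt6Aux.key hA' i j k, Stmt6Aux.key hA' j k i, Stmt6Aux.key hA' k i j]
    simp only [Stmt6Aux.UF_eq hA']
    simp only [Stmt6Aux.BF]
    simp only [hA' j i, hA' k i, hA' k j,
      Stmt6Aux.QF_antisymm (x := x) hA' j.1 i.1, Stmt6Aux.QF_antisymm (x := x) hA' k.1 i.1,
      Stmt6Aux.QF_antisymm (x := x) hA' k.1 j.1,
      Stmt6Aux.GF_symm (x := x) hA' j.1 k i, Stmt6Aux.GF_symm (x := x) hA' k.1 j i,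
      Stmt6Aux.GF_symm (x := x) hA' i.1 k j,
      Stmt6Aux.HF_symm (A := A) (x := x) i.1 k.1 j.1, Stmt6Aux.HF_symm (A := A) (x := x) j.1 k.1 i.1,
      Stmt6Aux.HF_symm (A := A) (x := x) k.1 j.1 i.1]
    ring
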